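/- There exists a simple graph G together with a partition P of its vertex set into 3 independent sets of size 3, with exactly 3 pairwise non-adjacent edges between every pair of classes (so G is [3,3,3]-partite with respect to P), such that G has no independent covering with respect to P. -/

import Mathlib

/-- `G` admits two orthogonal proper colourings, each using at most `k` colours:
two proper colourings such that no two distinct vertices receive the same pair of colours. -/
def HasOrthColoring {V : Type*} (G : SimpleGraph V) (k : ℕ) : Prop :=
  ∃ c₁ c₂ : V → Fin k,
    (∀ ⦃u v⦄, G.Adj u v → c₁ u ≠ c₁ v) ∧
    (∀ ⦃u v⦄, G.Adj u v → c₂ u ≠ c₂ v) ∧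
    Function.Injective fun v => (c₁ v, c₂ v)

/-- `G` is `[n,k,r]`-partite with respect to the partition `A` of its vertex set:
the classes `A i` partition the vertices, each class has size `k` and is an independent set,
and between every pair of distinct classes there are exactly `r` edges, which are
pairwise non-adjacent (they form a matching). -/
def IsPartiteNKR {V : Type*} (G : SimpleGraph V) (n k r : ℕ) (A : Fin n → Finset V) : Prop :=
  (∀ v : V, ∃! i, v ∈ A i) ∧
  (∀ i, (A i).card = k) ∧
  (∀ i, ∀ u ∈ A i, ∀ v ∈ A i, ¬ G.Adj u v) ∧
  ∀ i j, i ≠ j →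
    {p : V × V | p.1 ∈ A i ∧ p.2 ∈ A j ∧ G.Adj p.1 p.2}.ncard = r ∧
    ∀ p q : V × V,
      p.1 ∈ A i → p.2 ∈ A j → G.Adj p.1 p.2 →
      q.1 ∈ A i → q.2 ∈ A j → G.Adj q.1 q.2 →
      p ≠ q → p.1 ≠ q.1 ∧ p.2 ≠ q.2

/-- `T` is an independent transversal of `G` with respect to the partition `A`:
an independent set containing exactly one vertex from each class. -/
def IsIndepTransversal {V : Type*} {n : ℕ} (G : SimpleGraph V) (A : Fin n → Finset V)
    (T : Finset V) : Prop :=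
  (∀ u ∈ T, ∀ v ∈ T, ¬ G.Adj u v) ∧ ∀ i, ∃! v, v ∈ T ∧ v ∈ A i

/-- `G` has an independent covering with respect to the partition `A`:
a collection of pairwise disjoint independent transversals spanning all vertices. -/
def HasIndepCovering {V : Type*} {n : ℕ} (G : SimpleGraph V) (A : Fin n → Finset V) : Prop :=
  ∃ (m : ℕ) (T : Fin m → Finset V),
    (∀ j, IsIndepTransversal G A (T j)) ∧
    (Pairwise fun j j' => Disjoint (T j) (T j')) ∧
    ∀ v : V, ∃ j, v ∈ T j

namespace Aux333

abbrev V : Type := Fin 3 × Fin 3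

def sw : Fin 3 → Fin 3 := fun x => if x = 0 then 1 else if x = 1 then 0 else x

def mm (i j : Fin 3) : Fin 3 → Fin 3 := fun x =>
  if (i = 0 ∧ j = 2) ∨ (i = 2 ∧ j = 0) then sw x else x

def adjB (u v : V) : Bool := u.1 ≠ v.1 && v.2 = mm u.1 v.1 u.2

lemma adjB_symm : ∀ u v : V, adjB u v = true → adjB v u = true := by decide
lemma adjB_irrefl : ∀ u : V, ¬ adjB u u = true := by decide

def G : SimpleGraph V where
  Adj u v := adjB u v = true
  symm := ⟨fun u v h => adjB_symm u v h⟩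
  loopless := ⟨fun u h => adjB_irrefl u h⟩

instance : DecidableRel G.Adj := fun u v => inferInstanceAs (Decidable (adjB u v = true))

def A : Fin 3 → Finset V := fun i => Finset.univ.filter (fun v => v.1 = i)

lemma key : ¬ ∃ f g : Fin 3 → Fin 3,
    Function.Injective f ∧ Function.Injective g ∧
    ∀ x, x ≠ f x ∧ f x ≠ g x ∧ g x ≠ sw x := by decide

lemma adj01 : ∀ x y : Fin 3, x = y → G.Adj (0, x) (1, y) := by decide
lemma adj12 : ∀ x y : Fin 3, x = y → G.Adj (1, x) (2, y) := by decide
lemma adj02 : ∀ x y : Fin 3, y = sw x → G.Adj (0, x) (2, y) := by decide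

lemma cardlem : ∀ i j : Fin 3, i ≠ j →
    (Finset.univ.filter (fun p : V × V => p.1 ∈ A i ∧ p.2 ∈ A j ∧ G.Adj p.1 p.2)).card = 3 := by
  decide

lemma matchcore : ∀ i j a b c d : Fin 3, i ≠ j →
    adjB (i, a) (j, b) = true → adjB (i, c) (j, d) = true →
    ¬(a = c ∧ b = d) → a ≠ c ∧ b ≠ d := by decide

lemma mem_A {v : V} {i : Fin 3} (h : v ∈ A i) : v.1 = i := by
  simpa [A] using h

lemma matchlem : ∀ i j : Fin 3, i ≠ j →
    ∀ p q : V × V,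
      p.1 ∈ A i → p.2 ∈ A j → G.Adj p.1 p.2 →
      q.1 ∈ A i → q.2 ∈ A j → G.Adj q.1 q.2 →
      p ≠ q → p.1 ≠ q.1 ∧ p.2 ≠ q.2 := by
  rintro i j hij ⟨⟨i1, a⟩, ⟨j1, b⟩⟩ ⟨⟨i2, c⟩, ⟨j2, d⟩⟩ hp1 hp2 hadj hq1 hq2 hadj' hne
  have e1 : i1 = i := mem_A hp1
  have e2 : j1 = j := mem_A hp2
  have e3 : i2 = i := mem_A hq1
  have e4 : j2 = j := mem_A hq2
  subst e1 e2 e3 e4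
  have hcd : ¬(a = c ∧ b = d) := by
    rintro ⟨rfl, rfl⟩; exact hne rfl
  obtain ⟨h1, h2⟩ := matchcore _ _ a b c d hij hadj hadj' hcd
  exact ⟨by simp [h1], by simp [h2]⟩

lemma partite : IsPartiteNKR G 3 3 3 A := by
  refine ⟨?_, by decide, by decide, ?_⟩
  · intro v
    exact ⟨v.1, by simp [A], fun y hy => (mem_A hy).symm⟩
  intro i j hij
  refine ⟨?_, matchlem i j hij⟩
  have hset : {p : V × V | p.1 ∈ A i ∧ p.2 ∈ A j ∧ G.Adj p.1 p.2} =
      ↑(Finset.univ.filter (fun p : V × V => p.1 ∈ A i ∧ p.2 ∈ A j ∧ G.Adj p.1 p.2)) := by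
    ext p; simp
  rw [hset, Set.ncard_coe_finset]
  exact cardlem i j hij

lemma no_cover : ¬ HasIndepCovering G A := by
  rintro ⟨m, T, hT, hdis, hcov⟩
  choose g hg using hcov
  have huniq : ∀ v j, v ∈ T j → j = g v := by
    intro v j hv
    by_contra h
    exact (Finset.disjoint_left.mp (hdis h)) hv (hg v)
  have memA : ∀ (i x : Fin 3), ((i, x) : V) ∈ A i := by decide
  have hinj : ∀ i : Fin 3, Function.Injective (fun x : Fin 3 => g (i, x)) := by
    intro i x y hxy
    simp only at hxy
    obtain ⟨w, _, hwu⟩ := (hT (g (i, x))).2 i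
    have e1 : ((i, x) : V) = w := hwu (i, x) ⟨hg (i, x), memA i x⟩
    have e2 : ((i, y) : V) = w := hwu (i, y) ⟨hxy ▸ hg (i, y), memA i y⟩
    have := e1.trans e2.symm
    exact (Prod.mk.injEq _ _ _ _ ▸ this).2
  have hsurj : ∀ (i : Fin 3) (j : Fin m), ∃ x, g (i, x) = j := by
    intro i j
    obtain ⟨w, ⟨hwT, hwA⟩, _⟩ := (hT j).2 i
    refine ⟨w.2, ?_⟩
    have hw1 : w.1 = i := mem_A hwA
    have : ((i, w.2) : V) = w := by rw [← hw1]
    rw [this]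
    exact (huniq w j hwT).symm
  have nonadj : ∀ u v : V, g u = g v → ¬ G.Adj u v := by
    intro u v h hadj
    exact (hT (g u)).1 u (hg u) v (h ▸ hg v) hadj
  let e : Fin 3 → (Fin 3 ≃ Fin m) := fun i =>
    Equiv.ofBijective (fun x => g (i, x)) ⟨hinj i, fun j => hsurj i j⟩
  have he : ∀ (i : Fin 3) (x : Fin 3), (e i) x = g (i, x) := fun i x => rfl
  set s1 : Fin 3 → Fin 3 := fun x => (e 1).symm ((e 0) x) with hs1
  set s2 : Fin 3 → Fin 3 := fun x => (e 2).symm ((e 0) x) with hs2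
  have hgs : ∀ (i : Fin 3) (x : Fin 3), g (i, (e i).symm ((e 0) x)) = g (0, x) := by
    intro i x
    have := (e i).apply_symm_apply ((e 0) x)
    rw [he i] at this
    rw [this, he 0]
  apply key
  refine ⟨s1, s2, (e 1).symm.injective.comp (e 0).injective,
    (e 2).symm.injective.comp (e 0).injective, fun x => ⟨?_, ?_, ?_⟩⟩
  · intro h
    exact nonadj (0, x) (1, s1 x) (hgs 1 x).symm (adj01 x (s1 x) h)
  · intro h
    exact nonadj (1, s1 x) (2, s2 x) ((hgs 1 x).trans (hgs 2 x).symm) (adj12 (s1 x) (s2 x) h)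
  · intro h
    exact nonadj (0, x) (2, s2 x) (hgs 2 x).symm (adj02 x (s2 x) h)

end Aux333

/-- There is a `[3,3,3]`-partite graph with no independent covering with respect to
its given `[3,3,3]`-partition. -/
theorem exists_333_partite_without_indepCovering :
    ∃ (V : Type) (G : SimpleGraph V) (A : Fin 3 → Finset V),
      IsPartiteNKR G 3 3 3 A ∧ ¬ HasIndepCovering G A :=
  ⟨Aux333.V, Aux333.G, Aux333.A, Aux333.partite, Aux333.no_cover⟩
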